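/- Let A be an associative unital F-algebra, f an F-algebra automorphism of A with f^n = id for some n ≥ 2, and c ∈ A such that the element 1 − c·f(c)·f²(c)···f^{n−1}(c) is invertible in A. Then the linear map F(x) = x − c·f(x) is bijective, with inverse F^{-1}(x) = (1 − c f(c) f²(c)···f^{n−1}(c))^{-1} · (x + c f(x) + c f(c) f²(x) + c f(c) f²(c) f³(x) + ··· + c f(c)···f^{n−2}(c) f^{n−1}(x)). -/
import Mathlib


/-- If `f` is an algebra automorphism with `fⁿ = id` and `1 − c·f(c)···f^{n−1}(c)` is
invertible, then `F(x) = x − c·f(x)` is bijective with the stated explicit inverse. -/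
theorem stmt_5 (F : Type*) [Field F] (A : Type*) [Ring A] [Algebra F A]
    (f : A ≃ₐ[F] A) (n : ℕ) (hn : 2 ≤ n) (hfn : ∀ x : A, (⇑f)^[n] x = x)
    (c : A)
    (hu : IsUnit ((1 : A) - ((List.range n).map (fun i => (⇑f)^[i] c)).prod)) :
    Function.Bijective (fun x : A => x - c * f x) ∧
    (∀ x : A,
      (fun x : A => x - c * f x)
        (Ring.inverse ((1 : A) - ((List.range n).map (fun i => (⇑f)^[i] c)).prod) *
          ∑ i ∈ Finset.range n, ((List.range i).map (fun j => (⇑f)^[j] c)).prod * (⇑f)^[i] x)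
        = x) ∧
    (∀ x : A,
      Ring.inverse ((1 : A) - ((List.range n).map (fun i => (⇑f)^[i] c)).prod) *
          ∑ i ∈ Finset.range n,
            ((List.range i).map (fun j => (⇑f)^[j] c)).prod * (⇑f)^[i] (x - c * f x)
        = x) := by
  have hmul : ∀ (i : ℕ) (a b : A), (⇑f)^[i] (a * b) = (⇑f)^[i] a * (⇑f)^[i] b := by
    intro i
    induction i with
    | zero => simp
    | succ k ih => intro a b; simp [Function.iterate_succ_apply', ih, map_mul]
  have hsubit : ∀ (i : ℕ) (a b : A), (⇑f)^[i] (a - b) = (⇑f)^[i] a - (⇑f)^[i] b := by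
    intro i
    induction i with
    | zero => simp
    | succ k ih => intro a b; simp [Function.iterate_succ_apply', ih, map_sub]
  set P : ℕ → A := fun i => ((List.range i).map (fun j => (⇑f)^[j] c)).prod with hPdef
  have hP0 : P 0 = 1 := by simp [hPdef]
  have hPsucc : ∀ i, P (i + 1) = P i * (⇑f)^[i] c := by
    intro i
    show ((List.range (i+1)).map (fun j => (⇑f)^[j] c)).prod = _
    rw [List.range_succ, List.map_append, List.prod_append, List.map_singleton,
      List.prod_singleton]
  have hPsucc' : ∀ i, P (i + 1) = c * f (P i) := by
    intro i
    have h1 : f (P i) = ((List.range i).map (fun j => (⇑f)^[j + 1] c)).prod := by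
      show f ((List.range i).map (fun j => (⇑f)^[j] c)).prod = _
      rw [map_list_prod f, List.map_map]
      congr 1
      apply List.map_congr_left
      intro j _
      simp [Function.comp, Function.iterate_succ_apply']
    rw [h1]
    show ((List.range (i+1)).map (fun j => (⇑f)^[j] c)).prod = _
    rw [List.range_succ_eq_map, List.map_cons, List.prod_cons, List.map_map]
    simp [Function.comp_def]
  set u := (1 : A) - P n with hu_def
  have h1 : u * Ring.inverse u = 1 := Ring.mul_inverse_cancel u hu
  have h2 : Ring.inverse u * u = 1 := Ring.inverse_mul_cancel u hu
  set u' := Ring.inverse u with hu'_def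
  -- key telescoping identity
  have tele : ∀ g : ℕ → A,
      (∑ i ∈ Finset.range n, g i) - (∑ i ∈ Finset.range n, g (i + 1)) = g 0 - g n := by
    intro g
    rw [← Finset.sum_sub_distrib, Finset.sum_range_sub' g n]
  have key1 : ∀ y : A,
      (∑ i ∈ Finset.range n, P i * (⇑f)^[i] y)
        - c * f (∑ i ∈ Finset.range n, P i * (⇑f)^[i] y) = u * y := by
    intro y
    have hc : c * f (∑ i ∈ Finset.range n, P i * (⇑f)^[i] y)
        = ∑ i ∈ Finset.range n, P (i + 1) * (⇑f)^[i + 1] y := by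
      rw [map_sum, Finset.mul_sum]
      refine Finset.sum_congr rfl fun i _ => ?_
      rw [map_mul, ← mul_assoc, ← hPsucc' i, Function.iterate_succ_apply']
    rw [hc, tele (fun i => P i * (⇑f)^[i] y)]
    simp only [Function.iterate_zero_apply, hP0, one_mul, hfn y]
    rw [hu_def, sub_mul, one_mul]
  have key2 : ∀ x : A,
      (∑ i ∈ Finset.range n, P i * (⇑f)^[i] (x - c * f x)) = u * x := by
    intro x
    have hc : ∀ i, P i * (⇑f)^[i] (x - c * f x)
        = P i * (⇑f)^[i] x - P (i + 1) * (⇑f)^[i + 1] x := by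
      intro i
      rw [hsubit, hmul, mul_sub, hPsucc i, Function.iterate_succ_apply, mul_assoc]
    calc (∑ i ∈ Finset.range n, P i * (⇑f)^[i] (x - c * f x))
        = ∑ i ∈ Finset.range n, (P i * (⇑f)^[i] x - P (i + 1) * (⇑f)^[i + 1] x) :=
          Finset.sum_congr rfl fun i _ => hc i
      _ = P 0 * (⇑f)^[0] x - P n * (⇑f)^[n] x := Finset.sum_range_sub' _ n
      _ = u * x := by
          simp only [Function.iterate_zero_apply, hP0, one_mul, hfn x]
          rw [hu_def, sub_mul, one_mul]
  -- commutation: u * c = c * f u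
  have hucomm : u * c = c * f u := by
    have hPn : P n * c = c * f (P n) := by
      have e1 := hPsucc n
      have e2 := hPsucc' n
      rw [hfn c] at e1
      rw [← e1, e2]
    rw [hu_def, map_sub, map_one, sub_mul, mul_sub, one_mul, mul_one, hPn]
  have hfu_inv : f u * f u' = 1 := by rw [← map_mul, h1, map_one]
  have hcf : c * f u' = u' * c := by
    calc c * f u' = (u' * u) * (c * f u') := by rw [h2, one_mul]
      _ = u' * ((u * c) * f u') := by rw [mul_assoc, mul_assoc]
      _ = u' * ((c * f u) * f u') := by rw [hucomm]
      _ = u' * (c * (f u * f u')) := by rw [mul_assoc]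
      _ = u' * c := by rw [hfu_inv, mul_one]
  -- right inverse: F (u' * S x) = x
  have part2 : ∀ x : A,
      (u' * ∑ i ∈ Finset.range n, P i * (⇑f)^[i] x)
        - c * f (u' * ∑ i ∈ Finset.range n, P i * (⇑f)^[i] x) = x := by
    intro x
    rw [map_mul, ← mul_assoc, hcf, mul_assoc, ← mul_sub, key1 x, ← mul_assoc, h2, one_mul]
  have part3 : ∀ x : A,
      u' * ∑ i ∈ Finset.range n, P i * (⇑f)^[i] (x - c * f x) = x := by
    intro x
    rw [key2 x, ← mul_assoc, h2, one_mul]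
  refine ⟨Function.bijective_iff_has_inverse.2
    ⟨fun x => u' * ∑ i ∈ Finset.range n, P i * (⇑f)^[i] x, fun x => part3 x, fun x => part2 x⟩,
    fun x => part2 x, fun x => part3 x⟩
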